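/- Let L^κ be as above, and let b(s) = (1 - s/τ) b₀ + (s/τ) b₁ be a linear-in-time interpolation with ‖b₀‖_∞ ≤ κβ and ‖b₁‖_∞ ≤ κβ. If w solves w'(s) = L^κ w(s) + b(s) with ‖w(0)‖_∞ ≤ β, then ‖w(τ)‖_∞ ≤ β. -/

import Mathlib

open scoped Matrix

lemma key_step {n : ℕ} (L : Matrix (Fin n) (Fin n) ℝ)
    (hoff : ∀ i j, i ≠ j → 0 ≤ L i j) (hrow : ∀ i, ∑ j, L i j ≤ 0)
    (κ h : ℝ) (hh : 0 ≤ h) (hh1 : ∀ i, h * (κ - L i i) ≤ 1) (hhκ : h * κ ≤ 1)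
    (v : Fin n → ℝ) :
    ‖v + h • (L - κ • (1 : Matrix (Fin n) (Fin n) ℝ)).mulVec v‖ ≤ (1 - h * κ) * ‖v‖ := by
  have hnn : 0 ≤ (1 - h * κ) * ‖v‖ := mul_nonneg (by linarith) (norm_nonneg v)
  rw [pi_norm_le_iff_of_nonneg hnn]
  intro i
  set c : Fin n → ℝ := fun j => (if i = j then 1 - h * κ else 0) + h * L i j with hc
  have hcnn : ∀ j, 0 ≤ c j := by
    intro j
    by_cases hij : i = j
    · subst hij
      have := hh1 i
      simp only [hc, if_true, eq_self_iff_true]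
      nlinarith
    · simpa [hc, hij] using mul_nonneg hh (hoff i j hij)
  have hR : ∑ j, c j * v j = (1 - h * κ) * v i + h * ∑ j, L i j * v j := by
    simp [hc, add_mul, Finset.sum_add_distrib, ite_mul, Finset.mul_sum, mul_assoc]
  have hLft : (v + h • (L - κ • (1 : Matrix (Fin n) (Fin n) ℝ)).mulVec v) i
      = v i + h * (∑ j, L i j * v j - κ * v i) := by
    have h1 : ((L - κ • (1 : Matrix (Fin n) (Fin n) ℝ)).mulVec v) i
        = ∑ j, L i j * v j - κ * v i := by
      simp only [Matrix.mulVec, dotProduct, Matrix.sub_apply, Matrix.smul_apply,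
        Matrix.one_apply, sub_mul, mul_ite, mul_one, mul_zero, ite_mul, zero_mul,
        Finset.sum_sub_distrib, Finset.mem_univ, if_true, mul_assoc, smul_eq_mul]
      rw [Finset.sum_ite_eq]
      simp
    simp [h1]
  have hcomp : (v + h • (L - κ • (1 : Matrix (Fin n) (Fin n) ℝ)).mulVec v) i
      = ∑ j, c j * v j := by rw [hLft, hR]; ring
  rw [Real.norm_eq_abs, hcomp]
  calc |∑ j, c j * v j| ≤ ∑ j, |c j * v j| := Finset.abs_sum_le_sum_abs _ _
    _ ≤ ∑ j, c j * ‖v‖ := by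
        refine Finset.sum_le_sum fun j _ => ?_
        rw [abs_mul, abs_of_nonneg (hcnn j)]
        exact mul_le_mul_of_nonneg_left ((Real.norm_eq_abs (v j)) ▸ norm_le_pi_norm v j) (hcnn j)
    _ = (∑ j, c j) * ‖v‖ := (Finset.sum_mul _ _ _).symm
    _ ≤ (1 - h * κ) * ‖v‖ := by
        apply mul_le_mul_of_nonneg_right _ (norm_nonneg v)
        have : ∑ j, c j = (1 - h * κ) + h * ∑ j, L i j := by
          simp [hc, Finset.sum_add_distrib, Finset.mul_sum]
        rw [this]
        nlinarith [hrow i, mul_nonpos_of_nonneg_of_nonpos hh (hrow i)]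

/-- if w solves w' = L^κ w + b(s) on [0,τ] with
b(s) = (1 - s/τ)b₀ + (s/τ)b₁, ‖b₀‖_∞ ≤ κβ, ‖b₁‖_∞ ≤ κβ, and ‖w(0)‖_∞ ≤ β, then
‖w(τ)‖_∞ ≤ β. -/
theorem stmt_12 {n : ℕ} (L : Matrix (Fin n) (Fin n) ℝ)
    (hoff : ∀ i j, i ≠ j → 0 ≤ L i j)
    (hrow : ∀ i, ∑ j, L i j ≤ 0)
    (κ β τ : ℝ) (hκ : 0 < κ) (hβ : 0 < β) (hτ : 0 < τ)
    (b₀ b₁ : Fin n → ℝ) (hb₀ : ‖b₀‖ ≤ κ * β) (hb₁ : ‖b₁‖ ≤ κ * β)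
    (w : ℝ → Fin n → ℝ)
    (hw : ∀ s ∈ Set.Icc (0 : ℝ) τ,
      HasDerivAt w
        ((L - κ • (1 : Matrix (Fin n) (Fin n) ℝ)).mulVec (w s)
          + ((1 - s / τ) • b₀ + (s / τ) • b₁)) s)
    (hw0 : ‖w 0‖ ≤ β) :
    ‖w τ‖ ≤ β := by
  set E : ℝ := κ + 1 + ∑ i, |L i i| with hE
  have hEpos : 0 < E := by
    have : (0:ℝ) ≤ ∑ i, |L i i| := Finset.sum_nonneg fun i _ => abs_nonneg _
    positivity
  set h₀ : ℝ := 1 / E with hh₀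
  have hh₀pos : 0 < h₀ := by positivity
  -- for 0 ≤ h ≤ h₀ the hypotheses of key_step hold
  have hsmall : ∀ h : ℝ, 0 ≤ h → h ≤ h₀ → (∀ i, h * (κ - L i i) ≤ 1) ∧ h * κ ≤ 1 := by
    intro h hh hhle
    have hhE : h * E ≤ 1 := by
      calc h * E ≤ h₀ * E := mul_le_mul_of_nonneg_right hhle hEpos.le
        _ = 1 := by rw [hh₀, one_div_mul_cancel hEpos.ne']
    constructor
    · intro i
      have h1 : |L i i| ≤ ∑ j, |L j j| :=
        Finset.single_le_sum (fun j _ => abs_nonneg (L j j)) (Finset.mem_univ i)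
      have h2 : κ - L i i ≤ E := by
        have := neg_abs_le (L i i)
        simp only [hE]; linarith
      calc h * (κ - L i i) ≤ h * E := mul_le_mul_of_nonneg_left h2 hh
        _ ≤ 1 := hhE
    · have : κ ≤ E := by
        have : (0:ℝ) ≤ ∑ i, |L i i| := Finset.sum_nonneg fun i _ => abs_nonneg _
        simp only [hE]; linarith
      calc h * κ ≤ h * E := mul_le_mul_of_nonneg_left this hh
        _ ≤ 1 := hhE
  set f : ℝ → ℝ := fun s => ‖w s‖ with hf
  set f' : ℝ → ℝ := fun s => κ * β - κ * ‖w s‖ with hf'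
  have hcont : ContinuousOn f (Set.Icc 0 τ) := fun x hx =>
    ((hw x hx).continuousAt.continuousWithinAt).norm
  clear_value f f'
  -- bound on b(x)
  have hb : ∀ x ∈ Set.Icc (0:ℝ) τ, ‖(1 - x / τ) • b₀ + (x / τ) • b₁‖ ≤ κ * β := by
    intro x hx
    have h1 : 0 ≤ x / τ := div_nonneg hx.1 hτ.le
    have h2 : x / τ ≤ 1 := by rw [div_le_one hτ]; exact hx.2
    calc ‖(1 - x / τ) • b₀ + (x / τ) • b₁‖ ≤ ‖(1 - x / τ) • b₀‖ + ‖(x / τ) • b₁‖ :=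
          norm_add_le _ _
      _ = (1 - x / τ) * ‖b₀‖ + (x / τ) * ‖b₁‖ := by
          rw [norm_smul, norm_smul, Real.norm_eq_abs, Real.norm_eq_abs,
            abs_of_nonneg (by linarith), abs_of_nonneg h1]
      _ ≤ (1 - x / τ) * (κ * β) + (x / τ) * (κ * β) :=
          add_le_add (mul_le_mul_of_nonneg_left hb₀ (by linarith))
            (mul_le_mul_of_nonneg_left hb₁ h1)
      _ = κ * β := by ring
  -- the liminf-slope estimate
  have hslope : ∀ x ∈ Set.Ico (0:ℝ) τ, ∀ r, f' x < r →
      ∃ᶠ z in nhdsWithin x (Set.Ioi x), slope f x z < r := by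
    intro x hx r hr
    have hxI : x ∈ Set.Icc (0:ℝ) τ := ⟨hx.1, hx.2.le⟩
    set d : Fin n → ℝ := (L - κ • (1 : Matrix (Fin n) (Fin n) ℝ)).mulVec (w x)
      + ((1 - x / τ) • b₀ + (x / τ) • b₁) with hd
    have hder : HasDerivAt w d x := hw x hxI
    obtain ⟨ε, hε, hεr⟩ : ∃ ε > 0, f' x + ε < r :=
      ⟨(r - f' x) / 2, by linarith, by linarith⟩
    have hlo : (fun z => w z - w x - (z - x) • d) =o[nhds x] fun z => z - x :=
      hasDerivAt_iff_isLittleO.mp hder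
    have ev1 : ∀ᶠ z in nhdsWithin x (Set.Ioi x),
        ‖w z - w x - (z - x) • d‖ ≤ ε * ‖z - x‖ :=
      (hlo.def hε).filter_mono nhdsWithin_le_nhds
    have ev2 : ∀ᶠ z in nhdsWithin x (Set.Ioi x), z ∈ Set.Ioo x (x + h₀) :=
      Ioo_mem_nhdsGT_of_mem ⟨le_refl x, by linarith⟩
    refine ((ev1.and ev2).mono ?_).frequently
    rintro z ⟨hz1, hz2⟩
    set h : ℝ := z - x with hzh
    have hhpos : 0 < h := by simp only [hzh]; linarith [hz2.1]
    have hhle : h ≤ h₀ := by simp only [hzh]; linarith [hz2.2]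
    obtain ⟨hk1, hk2⟩ := hsmall h hhpos.le hhle
    have key := key_step L hoff hrow κ h hhpos.le hk1 hk2 (w x)
    have hfz : f z ≤ (1 - h * κ) * f x + h * (κ * β) + ε * h := by
      have htr : f z ≤ ‖w x + h • d‖ + ‖w z - w x - h • d‖ := by
        have := norm_add_le (w x + h • d) (w z - w x - h • d)
        have heq : w x + h • d + (w z - w x - h • d) = w z := by abel
        rw [heq] at this
        simpa [hf] using this
      have hsplit : ‖w x + h • d‖ ≤ (1 - h * κ) * ‖w x‖ + h * (κ * β) := by
        have : w x + h • d = (w x + h • (L - κ • (1 : Matrix (Fin n) (Fin n) ℝ)).mulVec (w x))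
            + h • ((1 - x / τ) • b₀ + (x / τ) • b₁) := by
          simp only [hd, smul_add]; abel
        rw [this]
        calc ‖_ + _‖ ≤ ‖w x + h • (L - κ • (1 : Matrix (Fin n) (Fin n) ℝ)).mulVec (w x)‖
              + ‖h • ((1 - x / τ) • b₀ + (x / τ) • b₁)‖ := norm_add_le _ _
          _ ≤ (1 - h * κ) * ‖w x‖ + h * (κ * β) := by
              refine add_le_add key ?_
              rw [norm_smul, Real.norm_eq_abs, abs_of_nonneg hhpos.le]
              exact mul_le_mul_of_nonneg_left (hb x hxI) hhpos.le
      have hrem : ‖w z - w x - h • d‖ ≤ ε * h := by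
        have := hz1
        rwa [Real.norm_eq_abs, abs_of_nonneg hhpos.le] at this
      calc f z ≤ ‖w x + h • d‖ + ‖w z - w x - h • d‖ := htr
        _ ≤ ((1 - h * κ) * ‖w x‖ + h * (κ * β)) + ε * h := add_le_add hsplit hrem
        _ = (1 - h * κ) * f x + h * (κ * β) + ε * h := by simp [hf]
    have : slope f x z = (f z - f x) / h := by
      rw [slope_def_field]
    rw [this]
    rw [div_lt_iff₀ hhpos]
    have hfx' : f' x = κ * β - κ * f x := by simp [hf', hf]
    rw [hfx'] at hεr
    nlinarith [hfz, mul_lt_mul_of_pos_left hεr hhpos]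
  -- comparison with β + c·exp(κ x) for every c > 0
  have hcomp : ∀ c : ℝ, 0 < c → f τ ≤ β + c * Real.exp (κ * τ) := by
    intro c hc
    have := image_le_of_liminf_slope_right_lt_deriv_boundary (f := f) (f' := f')
      (a := 0) (b := τ) hcont hslope
      (B := fun x => β + c * Real.exp (κ * x)) (B' := fun x => c * (κ * Real.exp (κ * x)))
      (by
        simp only [mul_zero, Real.exp_zero, mul_one]
        calc f 0 ≤ β := by simpa [hf] using hw0
          _ ≤ β + c := by linarith)
      (by
        intro x
        have h1 : HasDerivAt (fun x : ℝ => κ * x) κ x := by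
          simpa using (hasDerivAt_id x).const_mul κ
        have h2 : HasDerivAt (fun x : ℝ => Real.exp (κ * x)) (Real.exp (κ * x) * κ) x := h1.exp
        have h3 := (h2.const_mul c).const_add β
        show HasDerivAt (fun x => β + c * Real.exp (κ * x)) (c * (κ * Real.exp (κ * x))) x
        rw [mul_comm κ (Real.exp (κ * x))]
        exact h3)
      (by
        intro x hx hfx
        have hexp := Real.exp_pos (κ * x)
        have : f' x = κ * β - κ * f x := by simp [hf', hf]
        rw [this, hfx]
        show κ * β - κ * (β + c * Real.exp (κ * x)) < c * (κ * Real.exp (κ * x))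
        nlinarith [mul_pos (mul_pos hκ hc) hexp])
      (Set.right_mem_Icc.mpr hτ.le)
    exact this
  -- letting c → 0
  have : ∀ ε > (0:ℝ), f τ ≤ β + ε := by
    intro ε hε
    have hexp := Real.exp_pos (κ * τ)
    have hc : 0 < ε / Real.exp (κ * τ) := by positivity
    have := hcomp _ hc
    rwa [div_mul_cancel₀ _ hexp.ne'] at this
  simpa [hf] using le_of_forall_pos_le_add this
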